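/- Let M be an mtt and t ∈ T_Δ a fixed output tree, with run defined from M and t as in the context. Then for every s ∈ T_Σ: (s,t) ∈ τ_{IO,M} if and only if the triple (q0, (), t) — with the empty parameter vector and target t itself (the root subtree of t) — belongs to run(s). -/
import Mathlib


namespace MttF

/-- Finite ordered trees over a label type `α`. -/
inductive RTree (α : Type) : Type
  | node : α → List (RTree α) → RTree α

namespace RTree

variable {α β : Type}

/-- The root label of a tree. -/
def label : RTree α → α
  | node a _ => a

/-- The list of immediate subtrees of a tree. -/
def children : RTree α → List (RTree α)
  | node _ ts => ts

/-- Relabelling of trees. -/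
def map (f : α → β) : RTree α → RTree β
  | node a ts => node (f a) (ts.attach.map (fun x => map f x.1))
decreasing_by
  have := List.sizeOf_lt_of_mem x.2
  simp only [node.sizeOf_spec]
  omega

/-- A tree is well-formed with respect to a rank function if every node labeled
by a rank-`k` symbol has exactly `k` children. `T_Σ` is the set of well-formed
trees over `Σ`. -/
inductive Wf (rk : α → ℕ) : RTree α → Prop
  | node {a : α} {ts : List (RTree α)} :
      ts.length = rk a → (∀ t ∈ ts, Wf rk t) → Wf rk (node a ts)

/-- `Subtree u t` holds iff `u` is a subtree of `t` (rooted at some node of `t`). -/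
inductive Subtree : RTree α → RTree α → Prop
  | refl (t : RTree α) : Subtree t t
  | step {u c : RTree α} {a : α} {ts : List (RTree α)} :
      c ∈ ts → Subtree u c → Subtree u (node a ts)

end RTree

/-- Labels for output trees with parameters: trees over `Δ ∪ Y`. -/
inductive OLab (Δ : Type) : Type
  | out (d : Δ)
  | param (i : ℕ)

/-- Labels for right-hand sides of mtt rules: trees over `Δ ∪ (Q × X) ∪ Y`
(the second component of a call is the index of the input variable `x`). -/
inductive RLab (Δ Q : Type) : Type
  | out (d : Δ)
  | call (q : Q) (x : ℕ)
  | param (i : ℕ)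

/-- Labels for "semantic" trees over `Δ ∪ (Q × T_Σ) ∪ Y`. -/
inductive SLab (Γ Δ Q : Type) : Type
  | out (d : Δ)
  | call (q : Q) (s : RTree Γ)
  | param (i : ℕ)

/-- Trees over `Δ ∪ Y`. -/
abbrev OT (Δ : Type) := RTree (OLab Δ)
/-- Right-hand side trees over `Δ ∪ (Q × X) ∪ Y`. -/
abbrev Rhs (Δ Q : Type) := RTree (RLab Δ Q)
/-- Trees over `Δ ∪ (Q × T_Σ) ∪ Y`. -/
abbrev ST (Γ Δ Q : Type) := RTree (SLab Γ Δ Q)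

/-- First-order substitution `x_i := ss_i` on a label of a right-hand side
(indices are 0-based; for well-formed rules the index is always in range). -/
def RLab.subst {Γ Δ Q : Type} (ss : List (RTree Γ)) : RLab Δ Q → SLab Γ Δ Q
  | .out d => .out d
  | .param i => .param i
  | .call q x =>
    match ss[x]? with
    | some s => .call q s
    | none => .param x

/-- `r[x_1/s_1, …, x_k/s_k]`. -/
def substX {Γ Δ Q : Type} (ss : List (RTree Γ)) (r : Rhs Δ Q) : ST Γ Δ Q :=
  r.map (RLab.subst ss)

/-- Second-order (parameter) substitution `t[y_1/ts_1, …, y_n/ts_n]`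
(`y` indices are 0-based). -/
def substY {Δ : Type} (ts : List (OT Δ)) : OT Δ → OT Δ
  | .node (.param i) _ => ts.getD i (.node (.param i) [])
  | .node (.out d) us => .node (.out d) (us.attach.map (fun x => substY ts x.1))
decreasing_by
  have := List.sizeOf_lt_of_mem x.2
  simp only [RTree.node.sizeOf_spec]
  omega

/-- The embedding of `T_Δ` into the trees over `Δ ∪ Y`. -/
def embed {Δ : Type} (t : RTree Δ) : OT Δ := t.map OLab.out

variable {Γ Δ Q : Type}

/-- IO (call-by-value, inside-out) semantics: `SemIO rsel u t` holds iff
`t ∈ ⟦u⟧_IO`.  The rules of the transducer are given by a selector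
`rsel q σ ss`: the set of right-hand sides of the `⟨q,σ⟩`-rules that are
applicable when the children of the current input node are `ss` (for a plain
mtt this does not depend on `ss`, cf. `plainSel`). -/
inductive SemIO (rsel : Q → Γ → List (RTree Γ) → Set (Rhs Δ Q)) :
    ST Γ Δ Q → OT Δ → Prop
  | param (i : ℕ) :
      SemIO rsel (.node (.param i) []) (.node (.param i) [])
  | out {d : Δ} {us : List (ST Γ Δ Q)} {ts : List (OT Δ)}
      (hlen : ts.length = us.length)
      (h : ∀ i : Fin us.length, SemIO rsel (us.get i) (ts.get (i.cast hlen.symm))) :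
      SemIO rsel (.node (.out d) us) (.node (.out d) ts)
  | call {q : Q} {σ : Γ} {ss : List (RTree Γ)} {us : List (ST Γ Δ Q)}
      {r : Rhs Δ Q} {t₀ : OT Δ} {ts : List (OT Δ)}
      (hr : r ∈ rsel q σ ss)
      (h₀ : SemIO rsel (substX ss r) t₀)
      (hlen : ts.length = us.length)
      (h : ∀ i : Fin us.length, SemIO rsel (us.get i) (ts.get (i.cast hlen.symm))) :
      SemIO rsel (.node (.call q (.node σ ss)) us) (substY ts t₀)

mutual
/-- OI (call-by-name, outside-in) semantics: `SemOI rsel u t` holds iff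
`t ∈ ⟦u⟧_OI`. -/
inductive SemOI (rsel : Q → Γ → List (RTree Γ) → Set (Rhs Δ Q)) :
    ST Γ Δ Q → OT Δ → Prop
  | param (i : ℕ) :
      SemOI rsel (.node (.param i) []) (.node (.param i) [])
  | out {d : Δ} {us : List (ST Γ Δ Q)} {ts : List (OT Δ)}
      (hlen : ts.length = us.length)
      (h : ∀ i : Fin us.length, SemOI rsel (us.get i) (ts.get (i.cast hlen.symm))) :
      SemOI rsel (.node (.out d) us) (.node (.out d) ts)
  | call {q : Q} {σ : Γ} {ss : List (RTree Γ)} {us : List (ST Γ Δ Q)}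
      {r : Rhs Δ Q} {t₀ : OT Δ} {t : OT Δ}
      (hr : r ∈ rsel q σ ss)
      (h₀ : SemOI rsel (substX ss r) t₀)
      (hs : OISub rsel us t₀ t) :
      SemOI rsel (.node (.call q (.node σ ss)) us) t

/-- OI-substitution: `OISub rsel us t₀ t` holds iff `t ∈ (t₀ ←_OI (⟦us_1⟧_OI, …, ⟦us_n⟧_OI))`,
i.e. `t` is obtained from `t₀` by independently replacing every occurrence of a parameter
`y_i` by some member of `⟦us_i⟧_OI`. -/
inductive OISub (rsel : Q → Γ → List (RTree Γ) → Set (Rhs Δ Q)) :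
    List (ST Γ Δ Q) → OT Δ → OT Δ → Prop
  | param {us : List (ST Γ Δ Q)} {i : ℕ} {t : OT Δ}
      (h : i < us.length) (hsem : SemOI rsel (us.get ⟨i, h⟩) t) :
      OISub rsel us (.node (.param i) []) t
  | out {us : List (ST Γ Δ Q)} {d : Δ} {ts ts' : List (OT Δ)}
      (hlen : ts'.length = ts.length)
      (h : ∀ i : Fin ts.length, OISub rsel us (ts.get i) (ts'.get (i.cast hlen.symm))) :
      OISub rsel us (.node (.out d) ts) (.node (.out d) ts')
end

/-- The rule selector of a plain mtt: the applicable rules do not depend on the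
child subtrees of the current input node. -/
def plainSel (rules : Q → Γ → Set (Rhs Δ Q)) :
    Q → Γ → List (RTree Γ) → Set (Rhs Δ Q) :=
  fun q σ _ => rules q σ

/-- The translation `τ_{IO,M} ⊆ T_Σ × T_Δ` realized in IO mode. -/
def tauIO (rankΓ : Γ → ℕ) (rankΔ : Δ → ℕ)
    (rsel : Q → Γ → List (RTree Γ) → Set (Rhs Δ Q)) (q₀ : Q) :
    Set (RTree Γ × RTree Δ) :=
  {p | p.1.Wf rankΓ ∧ p.2.Wf rankΔ ∧
       SemIO rsel (.node (.call q₀ p.1) []) (embed p.2)}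

/-- The translation `τ_{OI,M} ⊆ T_Σ × T_Δ` realized in OI mode. -/
def tauOI (rankΓ : Γ → ℕ) (rankΔ : Δ → ℕ)
    (rsel : Q → Γ → List (RTree Γ) → Set (Rhs Δ Q)) (q₀ : Q) :
    Set (RTree Γ × RTree Δ) :=
  {p | p.1.Wf rankΓ ∧ p.2.Wf rankΔ ∧
       SemOI rsel (.node (.call q₀ p.1) []) (embed p.2)}

/-- Well-formedness of a right-hand side of a rule of an mtt whose current
input symbol has rank `k` and whose current state has rank `m`: output symbols
have the correct number of children, state calls `⟨q', x_i⟩` have `rank q'`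
children and `i < k`, and parameters `y_j` satisfy `j < m`. -/
inductive RhsWf (rankΔ : Δ → ℕ) (rankQ : Q → ℕ) (k m : ℕ) : Rhs Δ Q → Prop
  | out {d : Δ} {ts : List (Rhs Δ Q)}
      (hlen : ts.length = rankΔ d) (h : ∀ t ∈ ts, RhsWf rankΔ rankQ k m t) :
      RhsWf rankΔ rankQ k m (.node (.out d) ts)
  | call {q : Q} {x : ℕ} {ts : List (Rhs Δ Q)}
      (hx : x < k) (hlen : ts.length = rankQ q)
      (h : ∀ t ∈ ts, RhsWf rankΔ rankQ k m t) :
      RhsWf rankΔ rankQ k m (.node (.call q x) ts)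
  | param {i : ℕ} (hi : i < m) : RhsWf rankΔ rankQ k m (.node (.param i) [])

/-- Well-formedness of a tree over `Δ ∪ (Q × T_Σ) ∪ Y`. -/
inductive STWf (rankΓ : Γ → ℕ) (rankΔ : Δ → ℕ) (rankQ : Q → ℕ) : ST Γ Δ Q → Prop
  | out {d : Δ} {ts : List (ST Γ Δ Q)}
      (hlen : ts.length = rankΔ d) (h : ∀ t ∈ ts, STWf rankΓ rankΔ rankQ t) :
      STWf rankΓ rankΔ rankQ (.node (.out d) ts)
  | call {q : Q} {s : RTree Γ} {ts : List (ST Γ Δ Q)}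
      (hs : s.Wf rankΓ) (hlen : ts.length = rankQ q)
      (h : ∀ t ∈ ts, STWf rankΓ rankΔ rankQ t) :
      STWf rankΓ rankΔ rankQ (.node (.call q s) ts)
  | param (i : ℕ) : STWf rankΓ rankΔ rankQ (.node (.param i) [])

/-- A tree over `Δ ∪ (Q × T_Σ) ∪ Y` is parameter-free if no `y_i` occurs in it. -/
inductive NoParam : ST Γ Δ Q → Prop
  | node {l : SLab Γ Δ Q} {ts : List (ST Γ Δ Q)}
      (hl : ∀ i : ℕ, l ≠ .param i) (h : ∀ t ∈ ts, NoParam t) :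
      NoParam (.node l ts)

/-- A macro tree transducer `M = (Q, Σ, Δ, q₀, R)`.  The alphabets `Γ` (input),
`Δ` (output) and the set `Q` of states are ranked; `q₀` has rank `0`; `rules q σ`
is the (finite) set `R_{q,σ}` of right-hand sides of the `⟨q,σ⟩`-rules, and every
right-hand side is a well-formed tree over `Δ ∪ (Q × X_k) ∪ Y_m`. -/
structure MTT (Γ Δ Q : Type) where
  rankΓ : Γ → ℕ
  rankΔ : Δ → ℕ
  rankQ : Q → ℕ
  q₀ : Q
  q₀_rank : rankQ q₀ = 0
  rules : Q → Γ → Set (Rhs Δ Q)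
  rules_fin : ∀ q σ, (rules q σ).Finite
  rules_wf : ∀ q σ, ∀ r ∈ rules q σ, RhsWf rankΔ rankQ (rankΓ σ) (rankQ q) r

/-- The rule selector of a plain mtt. -/
def MTT.sel (M : MTT Γ Δ Q) : Q → Γ → List (RTree Γ) → Set (Rhs Δ Q) :=
  plainSel M.rules

end MttF
namespace MttF

/-- The set `V = V_t ∪ {⊥}`: `some w` stands for the subtree `w` of the fixed
output tree `t`, and `none` stands for `⊥`. -/
abbrev V (Δ : Type) := Option (RTree Δ)

/-- Triples `(q, v⃗, v') ∈ ⋃_i Q^{(i)} × V^i × V`. -/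
abbrev Trip (Δ Q : Type) := Q × List (V Δ) × V Δ

/-- `v` is a legitimate element of `V = V_t ∪ {⊥}` (for `some w`, `w` must be a
subtree of `t`). -/
def InV {Δ : Type} (t : RTree Δ) : V Δ → Prop
  | none => True
  | some w => RTree.Subtree w t

/-- `rhoRel t t' v` holds iff `ρ(t') = v`, where `ρ(t') = t'` if `t'` is a
subtree of `t` and `ρ(t') = ⊥` otherwise (here `t'` ranges over trees over
`Δ ∪ Y`, and subtrees of `t` are compared via the embedding of `T_Δ`). -/
def rhoRel {Δ : Type} (t : RTree Δ) (t' : OT Δ) : V Δ → Prop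
  | some w => RTree.Subtree w t ∧ embed w = t'
  | none => ¬ ∃ w : RTree Δ, RTree.Subtree w t ∧ embed w = t'

/-- `ρ(T)` for a set `T` of output trees. -/
def rhoImg {Δ : Type} (t : RTree Δ) (T : Set (OT Δ)) : Set (V Δ) :=
  {v | ∃ t' ∈ T, rhoRel t t' v}

/-- The predicate `f_{v⃗,a⃗}(r, v')` of the inverse-type construction for
IO-mtts, for the fixed output tree `t`. -/
inductive FPred {Δ Q : Type} (t : RTree Δ) (vs : List (V Δ))
    (aenv : List (Set (Trip Δ Q))) : Rhs Δ Q → V Δ → Prop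
  | param {i : ℕ} {v : V Δ} (h : vs[i]? = some v) :
      FPred t vs aenv (.node (.param i) []) v
  | outSome {d : Δ} {rs : List (Rhs Δ Q)} {w : RTree Δ}
      (hw : RTree.Subtree w t) (hl : w.label = d)
      (h : ∀ i : Fin rs.length, FPred t vs aenv (rs.get i) w.children[i.val]?) :
      FPred t vs aenv (.node (.out d) rs) (some w)
  | outNone {d : Δ} {rs : List (Rhs Δ Q)} (us : List (V Δ))
      (hlen : us.length = rs.length)
      (hus : ∀ u ∈ us, InV t u)
      (h : ∀ i : Fin rs.length, FPred t vs aenv (rs.get i) (us.get (i.cast hlen.symm)))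
      (hno : ¬ ∃ w : RTree Δ, RTree.Subtree w t ∧ w.label = d ∧
          ∀ i : Fin rs.length, w.children[i.val]? = us.get (i.cast hlen.symm)) :
      FPred t vs aenv (.node (.out d) rs) none
  | call {q' : Q} {x : ℕ} {rs : List (Rhs Δ Q)} {v : V Δ} (us : List (V Δ))
      (hlen : us.length = rs.length)
      (ha : (q', us, v) ∈ aenv.getD x ∅)
      (h : ∀ i : Fin rs.length, FPred t vs aenv (rs.get i) (us.get (i.cast hlen.symm))) :
      FPred t vs aenv (.node (.call q' x) rs) v

/-- The run `run(s)` of the (on-the-fly constructed) inverse-type automaton of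
an IO-mtt on the input tree `s`, for the fixed output tree `t`:
`run(σ(s_1,…,s_k)) = {(q, v⃗, v') | ∃ r ∈ R_{q,σ}: f_{v⃗,(run(s_1),…,run(s_k))}(r, v')}`. -/
def runIO {Γ Δ Q : Type} (rankQ : Q → ℕ)
    (rsel : Q → Γ → List (RTree Γ) → Set (Rhs Δ Q)) (t : RTree Δ) :
    RTree Γ → Set (Trip Δ Q)
  | .node σ ss =>
      {trip | trip.2.1.length = rankQ trip.1 ∧ (∀ v ∈ trip.2.1, InV t v) ∧
        InV t trip.2.2 ∧
        ∃ r ∈ rsel trip.1 σ ss,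
          FPred t trip.2.1 (ss.attach.map (fun x => runIO rankQ rsel t x.1)) r trip.2.2}
decreasing_by
  have := List.sizeOf_lt_of_mem x.2
  simp only [RTree.node.sizeOf_spec]
  omega

end MttF

namespace MttF

/-! ### Auxiliary development -/

section Aux

variable {Γ Δ Q : Type}

@[simp] lemma RTree.map_node {α β : Type} (f : α → β) (a : α) (ts : List (RTree α)) :
    RTree.map f (.node a ts) = .node (f a) (ts.map (RTree.map f)) := by
  rw [RTree.map]; congr 1; simp

@[simp] lemma embed_node (a : Δ) (ts : List (RTree Δ)) :
    embed (.node a ts) = .node (.out a) (ts.map embed) := by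
  simp [embed]

@[simp] lemma substX_node (ss : List (RTree Γ)) (l : RLab Δ Q) (rs : List (Rhs Δ Q)) :
    substX ss (.node l rs) = .node (l.subst ss) (rs.map (substX ss)) := by
  simp [substX]

@[simp] lemma substY_out (ts : List (OT Δ)) (d : Δ) (us : List (OT Δ)) :
    substY ts (.node (.out d) us) = .node (.out d) (us.map (substY ts)) := by
  rw [substY]; congr 1; simp

@[simp] lemma substY_param (ts : List (OT Δ)) (i : ℕ) (us : List (OT Δ)) :
    substY ts (.node (.param i) us) = ts.getD i (.node (.param i) []) := by
  rw [substY]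

lemma runIO_node (rankQ : Q → ℕ) (rsel : Q → Γ → List (RTree Γ) → Set (Rhs Δ Q))
    (t : RTree Δ) (σ : Γ) (ss : List (RTree Γ)) :
    runIO rankQ rsel t (.node σ ss) =
      {trip | trip.2.1.length = rankQ trip.1 ∧ (∀ v ∈ trip.2.1, InV t v) ∧
        InV t trip.2.2 ∧
        ∃ r ∈ rsel trip.1 σ ss,
          FPred t trip.2.1 (ss.map (runIO rankQ rsel t)) r trip.2.2} := by
  rw [runIO]; congr 1; ext trip; simp

lemma Subtree.of_mem_children {w c : RTree Δ} (h : c ∈ w.children) :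
    RTree.Subtree c w := by
  obtain ⟨a, ts⟩ := w
  exact RTree.Subtree.step h (RTree.Subtree.refl c)

lemma Subtree.trans {a b c : RTree Δ} (h1 : RTree.Subtree a b) (h2 : RTree.Subtree b c) :
    RTree.Subtree a c := by
  induction h2 with
  | refl => exact h1
  | step hmem _ ih => exact RTree.Subtree.step hmem ih

lemma Wf.of_subtree {rk : Δ → ℕ} {w t : RTree Δ} (h : RTree.Subtree w t) (ht : t.Wf rk) :
    w.Wf rk := by
  induction h with
  | refl => exact ht
  | step hmem _ ih =>
    cases ht with
    | node _ h2 => exact ih (h2 _ hmem)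

lemma embed_injective : ∀ {w w' : RTree Δ}, embed w = embed w' → w = w'
  | .node a ts, .node b us, h => by
    simp only [embed_node, RTree.node.injEq, OLab.out.injEq] at h
    obtain ⟨rfl, h⟩ := h
    have hlen : ts.length = us.length := by
      have := congrArg List.length h; simpa using this
    have : ts = us := by
      apply List.ext_getElem hlen
      intro i hi hi'
      have : embed ts[i] = embed us[i] := by
        have := congrArg (fun l => l[i]?) h
        simpa [List.getElem?_eq_getElem, hi, hi'] using this
      exact embed_injective this
    simp [this]
decreasing_by
  have := List.sizeOf_lt_of_mem (List.getElem_mem hi)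
  simp only [RTree.node.sizeOf_spec]
  omega

/-- The function `ρ` (relative to the fixed output tree `t`). -/
noncomputable def rho (t : RTree Δ) (u : OT Δ) : V Δ :=
  letI := Classical.dec (∃ w, RTree.Subtree w t ∧ embed w = u)
  if h : ∃ w, RTree.Subtree w t ∧ embed w = u then some h.choose else none

lemma rho_eq_some_iff {t : RTree Δ} {u : OT Δ} {w : RTree Δ} :
    rho t u = some w ↔ RTree.Subtree w t ∧ embed w = u := by
  constructor
  · intro h
    rw [rho] at h
    split at h
    · rename_i hex
      cases h
      exact hex.choose_spec
    · cases h
  · intro h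
    have hex : ∃ w, RTree.Subtree w t ∧ embed w = u := ⟨w, h⟩
    rw [rho, dif_pos hex]
    have := hex.choose_spec
    have : hex.choose = w := embed_injective (this.2.trans h.2.symm)
    rw [this]

lemma rho_eq_none_iff {t : RTree Δ} {u : OT Δ} :
    rho t u = none ↔ ¬ ∃ w, RTree.Subtree w t ∧ embed w = u := by
  rw [rho]
  split
  · rename_i hex
    simp [hex]
  · rename_i hex
    simp [hex]

lemma rho_embed {t w : RTree Δ} (h : RTree.Subtree w t) : rho t (embed w) = some w :=
  rho_eq_some_iff.2 ⟨h, rfl⟩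

@[simp] lemma rho_param (t : RTree Δ) (i : ℕ) (us : List (OT Δ)) :
    rho t (.node (.param i) us) = none := by
  rw [rho_eq_none_iff]
  rintro ⟨⟨a, ts⟩, -, hw⟩
  simp at hw

lemma rho_inV (t : RTree Δ) (u : OT Δ) : InV t (rho t u) := by
  cases h : rho t u with
  | none => trivial
  | some w => exact (rho_eq_some_iff.1 h).1

/-- Realization of an abstract value `v ∈ V` by a concrete tree with `ρ`-image `v`. -/
def realize : V Δ → OT Δ
  | none => .node (.param 0) []
  | some w => embed w

lemma rho_realize {t : RTree Δ} {v : V Δ} (h : InV t v) : rho t (realize v) = v := by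
  cases v with
  | none => simp [realize]
  | some w => exact rho_embed h

/-- All parameter indices occurring in a tree over `Δ ∪ Y` are `< m`. -/
inductive OParamsLT (m : ℕ) : OT Δ → Prop
  | out {d : Δ} {us : List (OT Δ)} (h : ∀ u ∈ us, OParamsLT m u) :
      OParamsLT m (.node (.out d) us)
  | param {i : ℕ} {us : List (OT Δ)} (h : i < m) : OParamsLT m (.node (.param i) us)

lemma OParamsLT.embed (m : ℕ) : ∀ (w : RTree Δ), OParamsLT m (embed w)
  | .node a ts => by
    rw [embed_node]
    refine OParamsLT.out ?_
    intro u hu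
    rw [List.mem_map] at hu
    obtain ⟨c, hc, rfl⟩ := hu
    exact OParamsLT.embed m c
decreasing_by
  have := List.sizeOf_lt_of_mem hc
  simp only [RTree.node.sizeOf_spec]
  omega

lemma substY_substY {A B : List (OT Δ)} : ∀ {u : OT Δ}, OParamsLT B.length u →
    substY A (substY B u) = substY (B.map (substY A)) u := by
  intro u h
  induction h with
  | @out d us _ ih =>
    simp only [substY_out, List.map_map]
    congr 1
    exact List.map_congr_left fun u hu => ih u hu
  | @param i us h =>
    simp only [substY_param]
    rw [List.getD_eq_getElem _ _ h, List.getD_eq_getElem _ _ (by simpa using h)]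
    simp

lemma OParamsLT.substY {m : ℕ} {B : List (OT Δ)} (hB : ∀ b ∈ B, OParamsLT m b) :
    ∀ {u : OT Δ}, OParamsLT B.length u → OParamsLT m (substY B u) := by
  intro u h
  induction h with
  | @out d us _ ih =>
    simp only [substY_out]
    exact OParamsLT.out (by
      intro x hx
      rw [List.mem_map] at hx
      obtain ⟨c, hc, rfl⟩ := hx
      exact ih c hc)
  | @param i us h =>
    simp only [substY_param]
    rw [List.getD_eq_getElem _ _ h]
    exact hB _ (List.getElem_mem h)

/-- Well-behavedness of a semantic tree: the input trees at call nodes are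
well-formed and state calls have the right number of parameters. -/
inductive STOk (rankΓ : Γ → ℕ) (rankQ : Q → ℕ) (m : ℕ) : ST Γ Δ Q → Prop
  | out {d : Δ} {us : List (ST Γ Δ Q)} (h : ∀ u ∈ us, STOk rankΓ rankQ m u) :
      STOk rankΓ rankQ m (.node (.out d) us)
  | call {q : Q} {s : RTree Γ} {us : List (ST Γ Δ Q)}
      (hs : s.Wf rankΓ) (hlen : us.length = rankQ q)
      (h : ∀ u ∈ us, STOk rankΓ rankQ m u) :
      STOk rankΓ rankQ m (.node (.call q s) us)
  | param {i : ℕ} {us : List (ST Γ Δ Q)} (h : i < m) :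
      STOk rankΓ rankQ m (.node (.param i) us)

lemma STOk.substX {rankΓ : Γ → ℕ} {rankΔ : Δ → ℕ} {rankQ : Q → ℕ} {m : ℕ}
    {ss : List (RTree Γ)} (hss : ∀ s ∈ ss, s.Wf rankΓ) :
    ∀ {r : Rhs Δ Q}, RhsWf rankΔ rankQ ss.length m r → STOk rankΓ rankQ m (substX ss r) := by
  intro r h
  induction h with
  | @out d rs hlen _ ih =>
    rw [substX_node]
    exact STOk.out (by
      intro u hu
      rw [List.mem_map] at hu
      obtain ⟨c, hc, rfl⟩ := hu
      exact ih c hc)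
  | @call q x rs hx hlen _ ih =>
    rw [substX_node]
    have hx' : ss[x]? = some ss[x] := List.getElem?_eq_getElem hx
    simp only [RLab.subst, hx']
    refine STOk.call (hss _ (List.getElem_mem hx)) (by simpa using hlen) ?_
    intro u hu
    rw [List.mem_map] at hu
    obtain ⟨c, hc, rfl⟩ := hu
    exact ih c hc
  | @param i hi =>
    rw [substX_node]
    exact STOk.param hi

/-- Lemma P: IO-values of well-behaved semantic trees have parameters `< m`. -/
lemma SemIO.paramsLT {M : MTT Γ Δ Q} :
    ∀ {u : ST Γ Δ Q} {t' : OT Δ}, SemIO M.sel u t' →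
    ∀ {m : ℕ}, STOk M.rankΓ M.rankQ m u → OParamsLT m t' := by
  intro u t' h
  induction h with
  | param i =>
    intro m hok
    cases hok with
    | param h => exact OParamsLT.param h
  | @out d us ts hlen _ ih =>
    intro m hok
    cases hok with
    | out h =>
      refine OParamsLT.out ?_
      intro x hx
      rw [List.mem_iff_getElem] at hx
      obtain ⟨i, hi, rfl⟩ := hx
      have hi' : i < us.length := by omega
      simpa using ih ⟨i, hi'⟩ (h _ (List.getElem_mem hi'))
  | @call q σ ss us r t₀ ts hr _ hlen _ ih₀ ih =>
    intro m hok
    cases hok with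
    | call hs hlen2 h =>
      cases hs with
      | @node _ _ hls hws =>
        have hwf := M.rules_wf q σ r hr
        have h₀ : OParamsLT (M.rankQ q) t₀ :=
          ih₀ (STOk.substX hws (by rwa [hls]))
        have hts : ∀ b ∈ ts, OParamsLT m b := by
          intro b hb
          rw [List.mem_iff_getElem] at hb
          obtain ⟨i, hi, rfl⟩ := hb
          have hi' : i < us.length := by omega
          simpa using ih ⟨i, hi'⟩ (h _ (List.getElem_mem hi'))
        exact OParamsLT.substY hts (by rw [hlen, hlen2]; exact h₀)

lemma rho_out_some_of {t : RTree Δ} {d : Δ} {l l' : List (OT Δ)} {w : RTree Δ}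
    (hlen : l.length = l'.length)
    (h : ∀ i (hi : i < l.length), rho t l[i] = rho t (l'[i]'(hlen ▸ hi)))
    (hw : rho t (.node (.out d) l) = some w) :
    rho t (.node (.out d) l') = some w := by
  obtain ⟨hsub, hemb⟩ := rho_eq_some_iff.1 hw
  obtain ⟨a, cs⟩ := w
  simp only [embed_node, RTree.node.injEq, OLab.out.injEq] at hemb
  obtain ⟨rfl, hemb⟩ := hemb
  have hcl : cs.length = l.length := by simpa using congrArg List.length hemb
  have hl' : cs.map embed = l' := by
    apply List.ext_getElem (by simp [hcl, hlen])
    intro i hi hi'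
    have hic : i < cs.length := by simpa using hi
    simp only [List.getElem_map]
    have hmem : cs[i] ∈ cs := List.getElem_mem hic
    have hsub' : RTree.Subtree cs[i] t :=
      Subtree.trans (Subtree.of_mem_children (by simpa [RTree.children] using hmem)) hsub
    have h1 : embed cs[i] = l[i]'(by omega) := by
      have := congrArg (fun m => m[i]?) hemb
      simpa [List.getElem?_eq_getElem, hic, List.getElem?_map,
        (by omega : i < l.length)] using this
    have h2 : rho t (l[i]'(by omega)) = some cs[i] := by rw [← h1, rho_embed hsub']
    have h3 : rho t l'[i] = some cs[i] := by rw [← h (i) (by omega), h2]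
    exact ((rho_eq_some_iff.1 h3).2).symm ▸ rfl
  exact rho_eq_some_iff.2 ⟨hsub, by simp [hl']⟩

lemma rho_out_congr {t : RTree Δ} {d : Δ} {l l' : List (OT Δ)}
    (hlen : l.length = l'.length)
    (h : ∀ i (hi : i < l.length), rho t l[i] = rho t (l'[i]'(hlen ▸ hi))) :
    rho t (.node (.out d) l) = rho t (.node (.out d) l') := by
  cases h1 : rho t (.node (.out d) l) with
  | some w => exact (rho_out_some_of hlen h h1).symm
  | none =>
    cases h2 : rho t (.node (.out d) l') with
    | none => rfl
    | some w =>
      have : rho t (.node (.out d) l) = some w :=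
        rho_out_some_of hlen.symm (fun i hi => (h i (by omega)).symm) h2
      rw [this] at h1; cases h1

lemma rho_substY_congr {t : RTree Δ} {A B : List (OT Δ)} (hlen : A.length = B.length)
    (h : ∀ i (hi : i < A.length), rho t A[i] = rho t (B[i]'(hlen ▸ hi))) :
    ∀ (u : OT Δ), rho t (substY A u) = rho t (substY B u)
  | .node (.param i) us => by
    simp only [substY_param]
    by_cases hi : i < A.length
    · rw [List.getD_eq_getElem _ _ hi, List.getD_eq_getElem _ _ (hlen ▸ hi)]
      exact h i hi
    · rw [List.getD_eq_getElem?_getD, List.getElem?_eq_none (le_of_not_gt hi),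
        List.getD_eq_getElem?_getD, List.getElem?_eq_none (le_of_not_gt (hlen ▸ hi))]
  | .node (.out d) us => by
    simp only [substY_out]
    refine rho_out_congr (by simp) ?_
    intro i hi
    have hi' : i < us.length := by simpa using hi
    have hmem : us[i] ∈ us := List.getElem_mem hi'
    have := rho_substY_congr hlen h us[i]
    simpa using this
decreasing_by
  have := List.sizeOf_lt_of_mem hmem
  simp only [RTree.node.sizeOf_spec]
  omega

/-- Soundness: every IO-computation is reflected in `runIO`. -/
lemma sound {M : MTT Γ Δ Q} {t : RTree Δ} (ht : t.Wf M.rankΔ)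
    {u : ST Γ Δ Q} {t' : OT Δ} (h : SemIO M.sel u t') :
    ∀ (r : Rhs Δ Q) (ss : List (RTree Γ)) (ts : List (OT Δ)),
    u = substX ss r →
    RhsWf M.rankΔ M.rankQ ss.length ts.length r →
    (∀ s ∈ ss, s.Wf M.rankΓ) →
    FPred t (ts.map (rho t)) (ss.map (runIO M.rankQ M.sel t)) r (rho t (substY ts t')) := by
  induction h with
  | param i =>
    rintro ⟨l, rs⟩ ss ts hu hwf hss
    rw [substX_node] at hu
    cases l with
    | out d => simp [RLab.subst] at hu
    | call q x =>
      cases hwf with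
      | call hx hlen h =>
        simp [RLab.subst, List.getElem?_eq_getElem hx] at hu
    | param j =>
      simp only [RLab.subst, RTree.node.injEq, SLab.param.injEq] at hu
      obtain ⟨rfl, hrs⟩ := hu
      cases hwf with
      | param hi =>
        rw [substY_param, List.getD_eq_getElem _ _ hi]
        exact FPred.param (by simp [List.getElem?_eq_getElem, hi])
  | @out d us vts hlen hsem ih =>
    rintro ⟨l, rs⟩ ss ts hu hwf hss
    rw [substX_node] at hu
    cases l with
    | call q x =>
      cases hwf with
      | call hx hlen2 h =>
        simp [RLab.subst, List.getElem?_eq_getElem hx] at hu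
    | param j => simp [RLab.subst] at hu
    | out d' =>
      simp only [RLab.subst, RTree.node.injEq, SLab.out.injEq] at hu
      obtain ⟨rfl, hus⟩ := hu
      cases hwf with
      | out hlen2 hwfs =>
        have husl : us.length = rs.length := by
          rw [hus]; simp
        have ihi : ∀ (i : ℕ) (hi : i < rs.length),
            FPred t (ts.map (rho t)) (ss.map (runIO M.rankQ M.sel t)) (rs[i])
              (rho t (substY ts (vts[i]'(by omega)))) := by
          intro i hi
          have hiu : i < us.length := by omega
          have := ih ⟨i, hiu⟩ rs[i] ss ts
            (by simp [hus]) (hwfs _ (List.getElem_mem hi)) hss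
          simpa using this
        rw [substY_out]
        cases hv : rho t (.node (.out d) (vts.map (substY ts))) with
        | some w =>
          obtain ⟨hsub, hemb⟩ := rho_eq_some_iff.1 hv
          obtain ⟨a, cs⟩ := w
          simp only [embed_node, RTree.node.injEq, OLab.out.injEq] at hemb
          obtain ⟨rfl, hemb⟩ := hemb
          have hcl : cs.length = vts.length := by
            have := congrArg List.length hemb; simpa using this
          refine FPred.outSome hsub (by simp [RTree.label]) ?_
          intro i
          have hi : i.val < rs.length := i.isLt
          have hic : i.val < cs.length := by omega
          have hcw : (RTree.node a cs).children[i.val]? = some cs[i.val] := by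
            simp [RTree.children, List.getElem?_eq_getElem, hic]
          rw [hcw]
          have h1 : embed cs[i.val] = substY ts (vts[i.val]'(by omega)) := by
            have := congrArg (fun m => m[i.val]?) hemb
            simpa [List.getElem?_eq_getElem, hic, (by omega : i.val < vts.length),
              List.getElem?_map] using this
          have hsub' : RTree.Subtree cs[i.val] t :=
            Subtree.trans (Subtree.of_mem_children
              (by simp only [RTree.children]; exact List.getElem_mem hic)) hsub
          have h2 : rho t (substY ts (vts[i.val]'(by omega))) = some cs[i.val] := by
            rw [← h1, rho_embed hsub']
          have := ihi i.val hi
          rw [h2] at this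
          simpa using this
        | none =>
          refine FPred.outNone (vts.map (fun x => rho t (substY ts x)))
            (by simp; omega) ?_ ?_ ?_
          · intro v hv'
            rw [List.mem_map] at hv'
            obtain ⟨c, hc, rfl⟩ := hv'
            exact rho_inV t _
          · intro i
            have hi : i.val < rs.length := i.isLt
            have := ihi i.val hi
            simpa [List.getElem_map, (by omega : i.val < vts.length)] using this
          · rintro ⟨w, hsubw, hlab, hch⟩
            have hwwf : w.Wf M.rankΔ := Wf.of_subtree hsubw ht
            obtain ⟨a0, cs⟩ := w
            cases hwwf with
            | node hclen hcwf =>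
              have ha : a0 = d := hlab
              subst ha
              have hcl : cs.length = rs.length := by omega
              have hembw : embed (RTree.node a0 cs) = .node (.out a0) (vts.map (substY ts)) := by
                simp only [embed_node, RTree.node.injEq, true_and]
                apply List.ext_getElem (by simp; omega)
                intro i hi hi'
                have hic : i < cs.length := by simpa using hi
                have hiv : i < vts.length := by simp at hi'; omega
                have := hch ⟨i, by omega⟩
                simp only [RTree.children, List.getElem?_eq_getElem hic, List.get_eq_getElem,
                  Fin.cast, List.getElem_map] at this
                have h3 : rho t (substY ts vts[i]) = some cs[i] := this.symm
                have := (rho_eq_some_iff.1 h3).2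
                simpa using this
              have : rho t (.node (.out a0) (vts.map (substY ts))) = some (RTree.node a0 cs) :=
                rho_eq_some_iff.2 ⟨hsubw, hembw⟩
              rw [this] at hv
              cases hv
  | @call q' σ' ss' us r' t₀ vts hr h₀ hlen hsem ih₀ ih =>
    rintro ⟨l, rs⟩ ss ts hu hwf hss
    rw [substX_node] at hu
    cases l with
    | out d => simp [RLab.subst] at hu
    | param j => simp [RLab.subst] at hu
    | call q x =>
      cases hwf with
      | call hx hlenq hwfs =>
        rw [show (RLab.call q x : RLab Δ Q).subst ss = .call q ss[x] by
          simp [RLab.subst, List.getElem?_eq_getElem hx]] at hu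
        simp only [RTree.node.injEq, SLab.call.injEq] at hu
        obtain ⟨⟨rfl, hsx⟩, hus⟩ := hu
        -- facts about ss[x]
        have hsxwf : (RTree.node σ' ss').Wf M.rankΓ := by
          rw [hsx]; exact hss _ (List.getElem_mem hx)
        have hss' : ∀ s ∈ ss', s.Wf M.rankΓ := by
          cases hsxwf with | node _ h2 => exact h2
        have hlss' : ss'.length = M.rankΓ σ' := by
          cases hsxwf with | node h1 _ => exact h1
        have hr' : r' ∈ M.rules q' σ' := hr
        have hrwf := M.rules_wf q' σ' r' hr'
        have husl : us.length = rs.length := by rw [hus]; simp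
        have hvl : vts.length = M.rankQ q' := by omega
        have hP : OParamsLT (M.rankQ q') t₀ :=
          SemIO.paramsLT h₀ (STOk.substX hss' (by rwa [hlss']))
        have hcomp : substY ts (substY vts t₀) = substY (vts.map (substY ts)) t₀ :=
          substY_substY (by rw [hvl]; exact hP)
        have ihi : ∀ (i : ℕ) (hi : i < rs.length),
            FPred t (ts.map (rho t)) (ss.map (runIO M.rankQ M.sel t)) (rs[i])
              (rho t (substY ts (vts[i]'(by omega)))) := by
          intro i hi
          have hiu : i < us.length := by omega
          have := ih ⟨i, hiu⟩ rs[i] ss ts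
            (by simp [hus]) (hwfs _ (List.getElem_mem hi)) hss
          simpa using this
        refine FPred.call ((vts.map (substY ts)).map (rho t)) (by simp; omega) ?_ ?_
        · have hgd : (ss.map (runIO M.rankQ M.sel t)).getD x ∅ =
              runIO M.rankQ M.sel t (RTree.node σ' ss') := by
            rw [List.getD_eq_getElem _ _ (by simpa using hx), List.getElem_map, hsx]
          rw [hgd, runIO_node]
          refine ⟨by simp [hvl], ?_, rho_inV t _, r', hr', ?_⟩
          · intro v hv'
            rw [List.mem_map] at hv'
            obtain ⟨c, hc, rfl⟩ := hv'
            exact rho_inV t _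
          · rw [hcomp]
            exact ih₀ r' ss' (vts.map (substY ts)) rfl
              (by rw [hlss']; simpa [hvl] using hrwf) hss'
        · intro i
          have hi : i.val < rs.length := i.isLt
          have := ihi i.val hi
          simpa [List.getElem_map, (by omega : i.val < vts.length)] using this

/-- Completeness, inner induction on `FPred`. -/
lemma completeAux {M : MTT Γ Δ Q} {t : RTree Δ} (ht : t.Wf M.rankΔ)
    (ss : List (RTree Γ)) (hss : ∀ s ∈ ss, s.Wf M.rankΓ)
    (IH : ∀ x (hx : x < ss.length), ∀ q (vs : List (V Δ)) v,
        (q, vs, v) ∈ runIO M.rankQ M.sel t ss[x] →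
        ∀ (ts : List (OT Δ)), ts.map (rho t) = vs →
        ∃ r ∈ M.rules q (ss[x]).label, ∃ t₀,
          SemIO M.sel (substX (ss[x]).children r) t₀ ∧ rho t (substY ts t₀) = v)
    {vs : List (V Δ)} {r : Rhs Δ Q} {v : V Δ}
    (hF : FPred t vs (ss.map (runIO M.rankQ M.sel t)) r v) :
    ∀ (ts : List (OT Δ)), ts.map (rho t) = vs →
    RhsWf M.rankΔ M.rankQ ss.length ts.length r →
    ∃ t₀, SemIO M.sel (substX ss r) t₀ ∧ rho t (substY ts t₀) = v := by
  induction hF with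
  | @param i v hv =>
    intro ts hts hwf
    cases hwf with
    | param hi =>
      refine ⟨.node (.param i) [], ?_, ?_⟩
      · rw [substX_node]
        exact SemIO.param i
      · rw [substY_param, List.getD_eq_getElem _ _ hi]
        rw [← hts, List.getElem?_map, List.getElem?_eq_getElem hi] at hv
        simpa using hv
  | @outSome d rs w hw hl hch ih =>
    intro ts hts hwf
    cases hwf with
    | out hlen2 hwfs =>
      obtain ⟨a0, cs⟩ := w
      have ha : a0 = d := hl
      subst ha
      have hwwf : (RTree.node a0 cs).Wf M.rankΔ := Wf.of_subtree hw ht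
      have hclen : cs.length = M.rankΔ a0 := by
        cases hwwf with | node h1 _ => exact h1
      have hcr : cs.length = rs.length := by omega
      have hcall : ∀ (i : ℕ) (hi : i < rs.length), ∃ t₀,
          SemIO M.sel (substX ss rs[i]) t₀ ∧
          rho t (substY ts t₀) = some (cs[i]'(by omega)) := by
        intro i hi
        have := ih ⟨i, hi⟩ ts hts (hwfs _ (List.getElem_mem hi))
        simp only [List.get_eq_getElem, RTree.children,
          List.getElem?_eq_getElem (show i < cs.length by omega)] at this
        exact this
      choose f hf1 hf2 using fun i : Fin rs.length => hcall i.val i.isLt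
      refine ⟨.node (.out a0) (List.ofFn f), ?_, ?_⟩
      · rw [substX_node]
        refine SemIO.out (by simp) ?_
        intro i
        have hi' : i.val < rs.length := by simpa using i.isLt
        have := hf1 ⟨i.val, hi'⟩
        simpa [List.getElem_ofFn] using this
      · rw [substY_out]
        have : (List.ofFn f).map (substY ts) = cs.map embed := by
          apply List.ext_getElem (by simp [hcr])
          intro i hi hi'
          have hir : i < rs.length := by simpa using hi
          have := hf2 ⟨i, hir⟩
          have := (rho_eq_some_iff.1 this).2
          simp only [List.getElem_map, List.getElem_ofFn]
          rw [this]
        rw [this]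
        apply rho_eq_some_iff.2
        exact ⟨hw, by simp⟩
  | @outNone d rs us hlen hus hch hno ih =>
    intro ts hts hwf
    cases hwf with
    | out hlen2 hwfs =>
      have hcall : ∀ (i : ℕ) (hi : i < rs.length), ∃ t₀,
          SemIO M.sel (substX ss rs[i]) t₀ ∧
          rho t (substY ts t₀) = us[i]'(by omega) := by
        intro i hi
        have := ih ⟨i, hi⟩ ts hts (hwfs _ (List.getElem_mem hi))
        simpa using this
      choose f hf1 hf2 using fun i : Fin rs.length => hcall i.val i.isLt
      refine ⟨.node (.out d) (List.ofFn f), ?_, ?_⟩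
      · rw [substX_node]
        refine SemIO.out (by simp) ?_
        intro i
        have hi' : i.val < rs.length := by simpa using i.isLt
        have := hf1 ⟨i.val, hi'⟩
        simpa [List.getElem_ofFn] using this
      · rw [substY_out]
        rw [rho_eq_none_iff]
        rintro ⟨w, hsubw, hembw⟩
        obtain ⟨a0, cs⟩ := w
        simp only [embed_node, RTree.node.injEq, OLab.out.injEq] at hembw
        obtain ⟨rfl, hembw⟩ := hembw
        have hwwf : (RTree.node a0 cs).Wf M.rankΔ := Wf.of_subtree hsubw ht
        have hclen : cs.length = M.rankΔ a0 := by
          cases hwwf with | node h1 _ => exact h1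
        have hcl : cs.length = rs.length := by
          have := congrArg List.length hembw
          simp at this
          omega
        refine hno ⟨RTree.node a0 cs, hsubw, rfl, ?_⟩
        intro i
        have hir : i.val < rs.length := i.isLt
        have hic : i.val < cs.length := by omega
        have h1 : embed (cs[i.val]'hic) = substY ts (f i) := by
          have := congrArg (fun m => m[i.val]?) hembw
          simpa [List.getElem?_eq_getElem, hic, hir, List.getElem?_map,
            List.getElem?_ofFn] using this
        have hsub' : RTree.Subtree (cs[i.val]'hic) t :=
          Subtree.trans (Subtree.of_mem_children
            (by simp only [RTree.children]; exact List.getElem_mem hic)) hsubw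
        have h2 : rho t (substY ts (f i)) = some (cs[i.val]'hic) := by
          rw [← h1, rho_embed hsub']
        have h3 := hf2 i
        rw [h2] at h3
        simp only [RTree.children, List.getElem?_eq_getElem hic, List.get_eq_getElem]
        exact h3
  | @call q' x rs v' us hlen ha hch ih =>
    intro ts hts hwf
    cases hwf with
    | call hx hlenq hwfs =>
      -- the triple sits in runIO of ss[x]
      have hgd : (ss.map (runIO M.rankQ M.sel t)).getD x ∅ =
          runIO M.rankQ M.sel t ss[x] := by
        rw [List.getD_eq_getElem _ _ (by simpa using hx), List.getElem_map]
      rw [hgd] at ha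
      have ha0 := ha
      obtain ⟨σ2, ss2, hsx⟩ : ∃ σ2 ss2, ss[x] = RTree.node σ2 ss2 := by
        cases h : ss[x] with
        | node a l => exact ⟨a, l, rfl⟩
      rw [hsx, runIO_node] at ha
      obtain ⟨hul, huInV, hvInV, -⟩ := ha
      -- realize the abstract parameter values
      have hreal : (us.map realize).map (rho t) = us := by
        rw [List.map_map]
        apply List.ext_getElem (by simp)
        intro i hi hi'
        simp only [List.getElem_map, Function.comp_apply]
        exact rho_realize (huInV _ (List.getElem_mem hi'))
      have hIH := IH x hx q' us v' ha0 (us.map realize) hreal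
      rw [hsx] at hIH
      simp only [RTree.label, RTree.children] at hIH
      obtain ⟨r'', hr'', t₀'', hsem'', hval''⟩ := hIH
      -- argument computations
      have hcall : ∀ (i : ℕ) (hi : i < rs.length), ∃ t₀,
          SemIO M.sel (substX ss rs[i]) t₀ ∧
          rho t (substY ts t₀) = us[i]'(by omega) := by
        intro i hi
        have := ih ⟨i, hi⟩ ts hts (hwfs _ (List.getElem_mem hi))
        simpa using this
      choose f hf1 hf2 using fun i : Fin rs.length => hcall i.val i.isLt
      -- well-formedness facts
      have hsxw : (RTree.node σ2 ss2).Wf M.rankΓ := by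
        rw [← hsx]; exact hss _ (List.getElem_mem hx)
      have hss2wf : ∀ s ∈ ss2, s.Wf M.rankΓ := by
        cases hsxw with | node _ h2 => exact h2
      have hlss2 : ss2.length = M.rankΓ σ2 := by
        cases hsxw with | node h1 _ => exact h1
      have hrwf := M.rules_wf q' σ2 r'' hr''
      have hP : OParamsLT (M.rankQ q') t₀'' :=
        SemIO.paramsLT hsem'' (STOk.substX hss2wf (by rwa [hlss2]))
      refine ⟨substY (List.ofFn f) t₀'', ?_, ?_⟩
      · rw [substX_node, show (RLab.call q' x : RLab Δ Q).subst ss = SLab.call q' ss[x] by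
          simp [RLab.subst, List.getElem?_eq_getElem hx], hsx]
        refine SemIO.call hr'' hsem'' (by simp) ?_
        intro i
        have hi' : i.val < rs.length := by simpa using i.isLt
        have := hf1 ⟨i.val, hi'⟩
        simpa [List.getElem_ofFn] using this
      · rw [substY_substY (by
          rw [List.length_ofFn]
          rw [hlenq]
          exact hP)]
        rw [← hval'']
        apply rho_substY_congr (by simp; omega)
        intro i hi
        have hir : i < rs.length := by simpa using hi
        have hiu : i < us.length := by omega
        simp only [List.getElem_map, List.getElem_ofFn]
        rw [hf2 ⟨i, hir⟩, rho_realize (huInV _ (List.getElem_mem hiu))]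

/-- Completeness: every triple in `runIO` is realized by an IO-computation. -/
lemma complete {M : MTT Γ Δ Q} {t : RTree Δ} (ht : t.Wf M.rankΔ) :
    ∀ (s : RTree Γ), s.Wf M.rankΓ → ∀ q (vs : List (V Δ)) v,
      (q, vs, v) ∈ runIO M.rankQ M.sel t s →
      ∀ (ts : List (OT Δ)), ts.map (rho t) = vs →
      ∃ r ∈ M.rules q s.label, ∃ t₀,
        SemIO M.sel (substX s.children r) t₀ ∧ rho t (substY ts t₀) = v
  | .node σ ss => by
    intro hs q vs v hmem ts hts
    rw [runIO_node] at hmem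
    obtain ⟨hvl, hvsInV, hvInV, r, hr, hF⟩ := hmem
    have hsswf : ∀ s ∈ ss, s.Wf M.rankΓ := by
      cases hs with | node _ h2 => exact h2
    have hssl : ss.length = M.rankΓ σ := by
      cases hs with | node h1 _ => exact h1
    have hvl' : vs.length = M.rankQ q := hvl
    have htsl : ts.length = M.rankQ q := by
      have := congrArg List.length hts
      simp at this
      omega
    have hwf : RhsWf M.rankΔ M.rankQ ss.length ts.length r := by
      rw [hssl, htsl]
      exact M.rules_wf q σ r hr
    have hIH : ∀ x (hx : x < ss.length), ∀ q' (vs' : List (V Δ)) v',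
        (q', vs', v') ∈ runIO M.rankQ M.sel t ss[x] →
        ∀ (ts' : List (OT Δ)), ts'.map (rho t) = vs' →
        ∃ r' ∈ M.rules q' (ss[x]).label, ∃ t₀,
          SemIO M.sel (substX (ss[x]).children r') t₀ ∧ rho t (substY ts' t₀) = v' := by
      intro x hx
      exact complete ht ss[x] (hsswf _ (List.getElem_mem hx))
    obtain ⟨t₀, hsem, hval⟩ := completeAux ht ss hsswf hIH hF ts hts hwf
    exact ⟨r, hr, t₀, hsem, hval⟩
decreasing_by
  have := List.sizeOf_lt_of_mem (List.getElem_mem hx)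
  simp only [RTree.node.sizeOf_spec]
  omega

end Aux

/-- For every `s ∈ T_Σ`: `(s,t) ∈ τ_{IO,M}` iff the triple
`(q0, (), t)` — with the empty parameter vector and target `t` itself (the root
subtree of `t`) — belongs to `run(s)`. -/
theorem translation_membership_iff_runIO {Γ Δ Q : Type}
    [Fintype Γ] [Fintype Δ] [Fintype Q]
    (M : MTT Γ Δ Q) (t : RTree Δ) (ht : t.Wf M.rankΔ)
    (s : RTree Γ) (hs : s.Wf M.rankΓ) :
    (s, t) ∈ tauIO M.rankΓ M.rankΔ M.sel M.q₀ ↔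
      (M.q₀, ([] : List (V Δ)), some t) ∈ runIO M.rankQ M.sel t s := by
  obtain ⟨σ, ss⟩ := s
  have hsswf : ∀ s' ∈ ss, s'.Wf M.rankΓ := by
    cases hs with | node _ h2 => exact h2
  have hssl : ss.length = M.rankΓ σ := by
    cases hs with | node h1 _ => exact h1
  constructor
  · rintro ⟨-, -, hsem⟩
    have hsem' : SemIO M.sel (.node (.call M.q₀ (.node σ ss)) []) (embed t) := hsem
    generalize hE : embed t = E at hsem'
    cases hsem' with
    | @call _ _ _ _ r t₀ ts hr h₀ hlen hargs =>
      have heq : substY ts t₀ = embed t := hE.symm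
      have hts : ts = [] := List.eq_nil_of_length_eq_zero (by simpa using hlen)
      subst hts
      have hF := sound ht h₀ r ss []
        rfl
        (by rw [hssl, show ([] : List (OT Δ)).length = M.rankQ M.q₀ by simp [M.q₀_rank]]
            exact M.rules_wf M.q₀ σ r hr)
        hsswf
      rw [heq] at hF
      rw [rho_embed (RTree.Subtree.refl t)] at hF
      rw [runIO_node]
      exact ⟨by simp [M.q₀_rank], by simp, RTree.Subtree.refl t, r, hr, by simpa using hF⟩
  · intro hmem
    refine ⟨hs, ht, ?_⟩
    obtain ⟨r, hr, t₀, hsem, hval⟩ :=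
      complete ht (.node σ ss) hs M.q₀ [] (some t) hmem [] rfl
    obtain ⟨-, hemb⟩ := rho_eq_some_iff.1 hval
    have hcall : SemIO M.sel (.node (.call M.q₀ (.node σ ss)) [])
        (substY ([] : List (OT Δ)) t₀) :=
      SemIO.call hr hsem (by simp) (fun i => i.elim0)
    rw [← hemb] at hcall
    exact hcall

end MttF
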